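/- Let G be a compact group acting measurably on X with a measurable orbit selector γ : X → X (so γ(g·x) = γ(x) and γ(x) lies in the orbit of x). If P is a G-invariant probability measure on X, X ∼ P, G ∼ λ (normalized Haar) with G independent of X, then the pair (X, γ(X)) has the same joint distribution as (G·γ(X), γ(X)). -/

import Mathlib

open MeasureTheory

/-- If `P` is a `G`-invariant probability measure, `X ∼ P`, and `G ∼ μ` (normalized Haar)
is independent of `X`, then `(X, γ(X))` has the same joint distribution as
`(G • γ(X), γ(X))`, where `γ` is a measurable orbit selector. -/
theorem invariant_pair_eq_smul_orbitSelector {G X : Type*} [Group G] [TopologicalSpace G]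
    [IsTopologicalGroup G] [CompactSpace G] [MeasurableSpace G] [BorelSpace G]
    [MulAction G X] [MeasurableSpace X] [MeasurableSMul₂ G X]
    (μ : Measure G) [IsProbabilityMeasure μ] [μ.IsMulLeftInvariant] [μ.IsMulRightInvariant]
    (γ : X → X) (hγmeas : Measurable γ)
    (hγinv : ∀ (g : G) (x : X), γ (g • x) = γ x)
    (hγorb : ∀ x : X, γ x ∈ MulAction.orbit G x)
    (P : Measure X) [IsProbabilityMeasure P]
    (hP : ∀ g : G, Measure.map (fun x => g • x) P = P) :
    Measure.map (fun x => (x, γ x)) P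
      = Measure.map (fun p : G × X => (p.1 • γ p.2, γ p.2)) (μ.prod P) := by
  have hms : Measurable fun p : G × X => p.1 • p.2 := measurable_smul
  have hm1 : Measurable fun p : G × X => (p.1 • γ p.2, γ p.2) :=
    (hms.comp (measurable_fst.prodMk (hγmeas.comp measurable_snd))).prodMk
      (hγmeas.comp measurable_snd)
  have hm2 : Measurable fun p : G × X => (p.1 • p.2, γ p.2) :=
    hms.prodMk (hγmeas.comp measurable_snd)
  -- step B : map ((g,x) ↦ (g•x, γ x)) (μ.prod P) = map (x ↦ (x, γ x)) P
  have hsmul : Measure.map (fun p : G × X => p.1 • p.2) (μ.prod P) = P := by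
    ext s hs
    rw [Measure.map_apply hms hs, Measure.prod_apply (hms hs)]
    have hconst : ∀ g : G, P (Prod.mk g ⁻¹' ((fun p : G × X => p.1 • p.2) ⁻¹' s)) = P s := by
      intro g
      have h1 : Prod.mk g ⁻¹' ((fun p : G × X => p.1 • p.2) ⁻¹' s)
          = (fun x : X => g • x) ⁻¹' s := rfl
      rw [h1, ← Measure.map_apply (measurable_const_smul g) hs, hP g]
    simp_rw [hconst]
    simp
  have hBfun : (fun p : G × X => (p.1 • p.2, γ p.2))
      = (fun y => (y, γ y)) ∘ (fun p : G × X => p.1 • p.2) := by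
    funext p; simp [hγinv]
  have stepB : Measure.map (fun p : G × X => (p.1 • p.2, γ p.2)) (μ.prod P)
      = Measure.map (fun x => (x, γ x)) P := by
    rw [hBfun, ← Measure.map_map (measurable_id'.prodMk hγmeas) hms, hsmul]
  -- step A : map ((g,x) ↦ (g•γx, γx)) (μ.prod P) = map ((g,x) ↦ (g•x, γx)) (μ.prod P)
  have stepA : Measure.map (fun p : G × X => (p.1 • γ p.2, γ p.2)) (μ.prod P)
      = Measure.map (fun p : G × X => (p.1 • p.2, γ p.2)) (μ.prod P) := by
    have hswap : μ.prod P = Measure.map Prod.swap (P.prod μ) := Measure.prod_swap.symm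
    rw [hswap, Measure.map_map hm1 measurable_swap, Measure.map_map hm2 measurable_swap]
    ext s hs
    rw [Measure.map_apply (hm1.comp measurable_swap) hs,
      Measure.map_apply (hm2.comp measurable_swap) hs,
      Measure.prod_apply ((hm1.comp measurable_swap) hs),
      Measure.prod_apply ((hm2.comp measurable_swap) hs)]
    refine lintegral_congr fun x => ?_
    obtain ⟨h, hh⟩ := hγorb x
    have hset : (Prod.mk x ⁻¹'
          (((fun p : G × X => (p.1 • γ p.2, γ p.2)) ∘ Prod.swap) ⁻¹' s))
        = (fun g : G => g * h) ⁻¹'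
          (Prod.mk x ⁻¹' (((fun p : G × X => (p.1 • p.2, γ p.2)) ∘ Prod.swap) ⁻¹' s)) := by
      ext g
      simp only [Set.mem_preimage, Function.comp_apply, Prod.swap_prod_mk]
      rw [← hh, smul_smul]
    rw [hset]
    have htm : MeasurableSet
        (Prod.mk x ⁻¹' (((fun p : G × X => (p.1 • p.2, γ p.2)) ∘ Prod.swap) ⁻¹' s)) :=
      measurable_prodMk_left ((hm2.comp measurable_swap) hs)
    rw [← Measure.map_apply (measurable_mul_const h) htm,
      map_mul_right_eq_self μ h]
  rw [stepA, stepB]
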